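/- Let a ∈ C_K with |a| > 1; set R = |a|^{−1/(p−1)}, μ = max(|p|, R), and S = μR³. Let m ≥ 1 and n ≥ 0 be integers, and let x ∈ C_K with |φ_a^n(x)| = R^{1−p^{−m}}. Let A > |a|^{−1} be a real number and let ε be a real number with 0 < ε ≤ A^{−1}S. Suppose that {Φ_n(b, x) : b ∈ D̄_ε(a)} ⊆ D̄_{Aε}(φ_a^n(x)) and that μ^m < A^{−1} R^{p+1}. Then the map b ↦ Φ_{n+m}(b, x) sends D̄_ε(a) bijectively onto D̄_{ε/|a|}(φ_a^{n+m}(x)). -/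

import Mathlib

set_option linter.unusedSectionVars false
set_option linter.unusedVariables false

/-- The polynomial map `φ_a(z) = (1-a) z^(p+1) + a z^p`. -/
def phi {K : Type*} [Field K] (p : ℕ) (a : K) (z : K) : K :=
  (1 - a) * z ^ (p + 1) + a * z ^ p

open Polynomial Metric Set Filter

section Helpers

variable {K : Type*} [NontriviallyNormedField K] [IsUltrametricDist K]

lemma pvs_add_le (x y : K) : ‖x + y‖ ≤ max ‖x‖ ‖y‖ :=
  IsUltrametricDist.norm_add_le_max x y

lemma pvs_add_eq_left {x y : K} (h : ‖y‖ < ‖x‖) : ‖x + y‖ = ‖x‖ := by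
  rw [IsUltrametricDist.norm_add_eq_max_of_norm_ne_norm (x := x) (y := y) (ne_of_gt h),
    max_eq_left h.le]

lemma pvs_sum_le {ι : Type*} {s : Finset ι} {f : ι → K} {M : ℝ} (hM : 0 ≤ M)
    (h : ∀ i ∈ s, ‖f i‖ ≤ M) : ‖∑ i ∈ s, f i‖ ≤ M :=
  IsUltrametricDist.norm_sum_le_of_forall_le_of_nonneg hM h

lemma pvs_sum_lt {ι : Type*} {s : Finset ι} {f : ι → K} {M : ℝ} (hM : 0 < M)
    (h : ∀ i ∈ s, ‖f i‖ < M) : ‖∑ i ∈ s, f i‖ < M := by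
  classical
  induction s using Finset.induction with
  | empty => simpa using hM
  | @insert i s' hx ih =>
    rw [Finset.sum_insert hx]
    refine lt_of_le_of_lt (pvs_add_le _ _) (max_lt (h i (Finset.mem_insert_self _ _)) ?_)
    exact ih fun i' hi' => h i' (Finset.mem_insert_of_mem hi')

lemma pvs_mul_coeff_bound {P Q : K[X]} {e α β : ℝ} (he : 0 < e)
    (hP : ∀ j, ‖P.coeff j‖ * e ^ j ≤ α) (hQ : ∀ j, ‖Q.coeff j‖ * e ^ j ≤ β) :
    ∀ j, ‖(P * Q).coeff j‖ * e ^ j ≤ α * β := by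
  intro j
  have hα : 0 ≤ α := le_trans (by positivity) (hP 0)
  have hβ : 0 ≤ β := le_trans (by positivity) (hQ 0)
  rw [coeff_mul, ← le_div_iff₀ (by positivity)]
  apply pvs_sum_le (by positivity)
  intro q hq
  have hq' : q.1 + q.2 = j := Finset.HasAntidiagonal.mem_antidiagonal.mp hq
  rw [le_div_iff₀ (by positivity), norm_mul, ← hq', pow_add]
  calc ‖P.coeff q.1‖ * ‖Q.coeff q.2‖ * (e ^ q.1 * e ^ q.2)
      = (‖P.coeff q.1‖ * e ^ q.1) * (‖Q.coeff q.2‖ * e ^ q.2) := by ring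
    _ ≤ α * β := mul_le_mul (hP q.1) (hQ q.2) (by positivity) hα

lemma pvs_pow_coeff_bound {P : K[X]} {e δ : ℝ} (he : 0 < e)
    (hP : ∀ j, ‖P.coeff j‖ * e ^ j ≤ δ) : ∀ i j, ‖(P ^ i).coeff j‖ * e ^ j ≤ δ ^ i := by
  intro i
  induction i with
  | zero =>
    intro j
    rcases Nat.eq_zero_or_pos j with h | h
    · simp [h]
    · simp [coeff_one, Nat.pos_iff_ne_zero.mp h]
  | succ i ih =>
    intro j
    rw [pow_succ, pow_succ]
    exact pvs_mul_coeff_bound he ih hP j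

end Helpers


lemma pvs_exists_norm_mem (K : Type*) [NontriviallyNormedField K] [IsAlgClosed K]
    {u v : ℝ} (hu : 0 < u) (huv : u < v) : ∃ t : K, u < ‖t‖ ∧ ‖t‖ < v := by
  obtain ⟨y, hy⟩ := NormedField.exists_one_lt_norm K
  have hw : 1 < v / u := (one_lt_div hu).2 huv
  obtain ⟨nn, hnn⟩ := pow_unbounded_of_one_lt (‖y‖ ^ 2) hw
  have hn0 : 0 < nn := by
    rcases Nat.eq_zero_or_pos nn with h | h
    · exfalso; rw [h, pow_zero] at hnn; nlinarith
    · exact h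
  obtain ⟨t₀, ht₀⟩ := IsAlgClosed.exists_pow_nat_eq y hn0
  have ht₀n : ‖t₀‖ ^ nn = ‖y‖ := by rw [← norm_pow, ht₀]
  have hc1 : 1 < ‖t₀‖ := by
    by_contra h
    push_neg at h
    have : ‖t₀‖ ^ nn ≤ 1 := pow_le_one₀ (norm_nonneg _) h
    rw [ht₀n] at this; linarith
  have hc0 : (0:ℝ) < ‖t₀‖ := by linarith
  have hc2 : ‖t₀‖ ^ 2 < v / u := by
    have h1 : (‖t₀‖ ^ 2) ^ nn < (v / u) ^ nn := by
      calc (‖t₀‖ ^ 2) ^ nn = (‖t₀‖ ^ nn) ^ 2 := by rw [← pow_mul, ← pow_mul, Nat.mul_comm]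
        _ = ‖y‖ ^ 2 := by rw [ht₀n]
        _ < (v / u) ^ nn := hnn
    exact lt_of_pow_lt_pow_left₀ nn (by positivity) h1
  obtain ⟨kk, hkk⟩ := exists_mem_Ioc_zpow hu hc1
  refine ⟨t₀ ^ (kk + 2), ?_, ?_⟩
  · rw [norm_zpow]
    have h1 : ‖t₀‖ ^ (kk + 2 : ℤ) = ‖t₀‖ ^ (kk + 1 : ℤ) * ‖t₀‖ := by
      rw [show (kk + 2 : ℤ) = (kk + 1) + 1 by ring, zpow_add₀ (ne_of_gt hc0), zpow_one]
    rw [h1]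
    have h2 : u * 1 < ‖t₀‖ ^ (kk + 1 : ℤ) * ‖t₀‖ := by
      apply mul_lt_mul' hkk.2 hc1 (by norm_num) (zpow_pos hc0 _)
    linarith
  · rw [norm_zpow]
    have h1 : ‖t₀‖ ^ (kk + 2 : ℤ) = ‖t₀‖ ^ kk * ‖t₀‖ ^ 2 := by
      rw [zpow_add₀ (ne_of_gt hc0), show ((2:ℤ)) = ((2:ℕ):ℤ) from rfl, zpow_natCast]
    rw [h1]
    calc ‖t₀‖ ^ kk * ‖t₀‖ ^ 2 < u * (v / u) :=
          mul_lt_mul'' hkk.1 hc2 (le_of_lt (zpow_pos hc0 _)) (by positivity)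
      _ = v := by field_simp


/-- Maximum principle: sup bound on a disk gives Gauss-norm coefficient bounds. -/
lemma pvs_coeff_le_of_forall_eval_le {K : Type*} [NontriviallyNormedField K]
    [IsUltrametricDist K] [IsAlgClosed K]
    (P : K[X]) {e M : ℝ} (he : 0 < e)
    (h : ∀ z : K, ‖z‖ ≤ e → ‖P.eval z‖ ≤ M) :
    ∀ j, ‖P.coeff j‖ * e ^ j ≤ M := by
  classical
  have hM0 : 0 ≤ M := le_trans (norm_nonneg _) (h 0 (by simp [he.le]))
  intro j
  by_cases hcj : P.coeff j = 0
  · simp [hcj, hM0]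
  have hjs : j ∈ P.support := mem_support_iff.2 hcj
  -- the set of "tie" radii is finite
  set Bad : Set ℝ := {ρ | 0 < ρ ∧ ρ < e ∧ ∃ i ∈ P.support, ∃ i' ∈ P.support, i ≠ i' ∧
      ‖P.coeff i‖ * ρ ^ i = ‖P.coeff i'‖ * ρ ^ i'} with hBadDef
  have key : ∀ (i i' : ℕ), i < i' → i' ∈ P.support → ∀ ρ1 ρ2 : ℝ, 0 < ρ1 → 0 < ρ2 →
      ‖P.coeff i‖ * ρ1 ^ i = ‖P.coeff i'‖ * ρ1 ^ i' →
      ‖P.coeff i‖ * ρ2 ^ i = ‖P.coeff i'‖ * ρ2 ^ i' → ρ1 = ρ2 := by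
    intro i i' hii hi' ρ1 ρ2 h1 h2 e1 e2
    have hci' : 0 < ‖P.coeff i'‖ := norm_pos_iff.2 (mem_support_iff.1 hi')
    have E1 : ρ1 ^ (i' - i) = ‖P.coeff i‖ / ‖P.coeff i'‖ := by
      have hpow : ρ1 ^ i' = ρ1 ^ i * ρ1 ^ (i' - i) := by
        rw [← pow_add]; congr 1; omega
      rw [hpow] at e1
      have hpi : (0:ℝ) < ρ1 ^ i := by positivity
      field_simp
      nlinarith [e1]
    have E2 : ρ2 ^ (i' - i) = ‖P.coeff i‖ / ‖P.coeff i'‖ := by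
      have hpow : ρ2 ^ i' = ρ2 ^ i * ρ2 ^ (i' - i) := by
        rw [← pow_add]; congr 1; omega
      rw [hpow] at e2
      have hpi : (0:ℝ) < ρ2 ^ i := by positivity
      field_simp
      nlinarith [e2]
    have hd : i' - i ≠ 0 := by omega
    have : ρ1 ^ (i' - i) = ρ2 ^ (i' - i) := by rw [E1, E2]
    rcases lt_trichotomy ρ1 ρ2 with hlt | heq | hgt
    · exfalso
      have := pow_lt_pow_left₀ hlt h1.le hd
      linarith
    · exact heq
    · exfalso
      have := pow_lt_pow_left₀ hgt h2.le hd
      linarith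
  have hBadfin : Bad.Finite := by
    have hsub : Bad ⊆ ⋃ q ∈ ((P.support ×ˢ P.support) : Finset (ℕ × ℕ)),
        {ρ : ℝ | 0 < ρ ∧ q.1 ≠ q.2 ∧ ‖P.coeff q.1‖ * ρ ^ q.1 = ‖P.coeff q.2‖ * ρ ^ q.2} := by
      rintro ρ ⟨hρ0, _, i, hi, i', hi', hne, heq⟩
      simp only [Set.mem_iUnion]
      exact ⟨(i, i'), Finset.mem_product.2 ⟨hi, hi'⟩, hρ0, hne, heq⟩
    refine Set.Finite.subset (Set.Finite.biUnion (Finset.finite_toSet _) ?_) hsub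
    rintro ⟨i, i'⟩ hq
    rw [Finset.mem_coe, Finset.mem_product] at hq
    apply Set.Subsingleton.finite
    rintro ρ1 ⟨h1, hne, e1⟩ ρ2 ⟨h2, _, e2⟩
    rcases lt_or_gt_of_ne hne with hlt | hgt
    · exact key i i' hlt hq.2 ρ1 ρ2 h1 h2 e1 e2
    · exact key i' i hgt hq.1 ρ1 ρ2 h1 h2 e1.symm e2.symm
  -- a threshold below e above which there are no ties
  have hβ : ∃ β : ℝ, 0 < β ∧ β < e ∧ ∀ ρ ∈ Bad, ρ ≤ β := by
    by_cases hne : hBadfin.toFinset.Nonempty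
    · refine ⟨max (e/2) (hBadfin.toFinset.max' hne), by positivity, ?_, ?_⟩
      · apply max_lt (by linarith)
        have h2 := (hBadfin.mem_toFinset.mp (Finset.max'_mem hBadfin.toFinset hne))
        exact h2.2.1
      · intro ρ hρ
        exact le_max_of_le_right (Finset.le_max' _ _ (hBadfin.mem_toFinset.2 hρ))
    · refine ⟨e/2, by linarith, by linarith, ?_⟩
      intro ρ hρ
      exact absurd ⟨ρ, hBadfin.mem_toFinset.2 hρ⟩ hne
  obtain ⟨β, hβ0, hβe, hβBad⟩ := hβ
  -- choose points with norm close to e avoiding ties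
  have hsel : ∀ l : ℕ, ∃ tt : K, max β (e - e / (l + 1)) < ‖tt‖ ∧ ‖tt‖ < e := by
    intro l
    apply pvs_exists_norm_mem K (lt_of_lt_of_le hβ0 (le_max_left _ _))
    apply max_lt hβe
    have : 0 < e / (l + 1 : ℝ) := by positivity
    linarith
  choose tt htt1 htt2 using hsel
  -- the key pointwise bound
  have hkey : ∀ l : ℕ, ‖P.coeff j‖ * ‖tt l‖ ^ j ≤ M := by
    intro l
    set ρ := ‖tt l‖ with hρdef
    have hρβ : β < ρ := lt_of_le_of_lt (le_max_left _ _) (htt1 l)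
    have hρ0 : 0 < ρ := lt_trans hβ0 hρβ
    have hρe : ρ < e := htt2 l
    have hρBad : ρ ∉ Bad := fun hmem => absurd (hβBad ρ hmem) (not_le.2 hρβ)
    obtain ⟨i₀, hi₀s, hi₀max⟩ := P.support.exists_max_image (fun i => ‖P.coeff i‖ * ρ ^ i) ⟨j, hjs⟩
    have hstrict : ∀ i ∈ P.support, i ≠ i₀ → ‖P.coeff i‖ * ρ ^ i < ‖P.coeff i₀‖ * ρ ^ i₀ := by
      intro i hi hne
      rcases lt_or_eq_of_le (hi₀max i hi) with hlt | heqq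
      · exact hlt
      · exact absurd ⟨hρ0, hρe, i, hi, i₀, hi₀s, hne, heqq⟩ hρBad
    have hw0 : 0 < ‖P.coeff i₀‖ * ρ ^ i₀ := by
      have := norm_pos_iff.2 (mem_support_iff.1 hi₀s)
      positivity
    have heval : ‖P.eval (tt l)‖ = ‖P.coeff i₀‖ * ρ ^ i₀ := by
      have hsum : P.eval (tt l) = ∑ i ∈ P.support, P.coeff i * tt l ^ i := by
        rw [eval_eq_sum, Polynomial.sum_def]
      have hsplit : P.eval (tt l) = P.coeff i₀ * tt l ^ i₀ +
          ∑ i ∈ P.support.erase i₀, P.coeff i * tt l ^ i := by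
        rw [hsum, ← Finset.add_sum_erase _ _ hi₀s]
      have hrest : ‖∑ i ∈ P.support.erase i₀, P.coeff i * tt l ^ i‖ <
          ‖P.coeff i₀ * tt l ^ i₀‖ := by
        rw [norm_mul, norm_pow]
        apply pvs_sum_lt hw0
        intro i hi
        rw [norm_mul, norm_pow]
        exact hstrict i (Finset.mem_of_mem_erase hi) (Finset.ne_of_mem_erase hi)
      rw [hsplit, pvs_add_eq_left hrest, norm_mul, norm_pow]
    calc ‖P.coeff j‖ * ρ ^ j ≤ ‖P.coeff i₀‖ * ρ ^ i₀ := hi₀max j hjs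
      _ = ‖P.eval (tt l)‖ := heval.symm
      _ ≤ M := h (tt l) hρe.le
  -- pass to the limit
  have hlim : Tendsto (fun l : ℕ => ‖tt l‖) atTop (nhds e) := by
    have hup : ∀ l : ℕ, ‖tt l‖ ≤ e := fun l => (htt2 l).le
    have hlo : ∀ l : ℕ, e - e / (l + 1) ≤ ‖tt l‖ :=
      fun l => (lt_of_le_of_lt (le_max_right _ _) (htt1 l)).le
    have h1 : Tendsto (fun l : ℕ => e - e / (l + 1 : ℝ)) atTop (nhds e) := by
      have h2 : Tendsto (fun l : ℕ => e / (l + 1 : ℝ)) atTop (nhds 0) := by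
        have h3 := tendsto_one_div_add_atTop_nhds_zero_nat.const_mul e
        simp only [mul_zero] at h3
        convert h3 using 2 with l
        rw [div_eq_mul_one_div]
      simpa using tendsto_const_nhds.sub h2
    exact tendsto_of_tendsto_of_tendsto_of_le_of_le h1 tendsto_const_nhds hlo hup
  have hlim2 : Tendsto (fun l : ℕ => ‖P.coeff j‖ * ‖tt l‖ ^ j) atTop
      (nhds (‖P.coeff j‖ * e ^ j)) :=
    (tendsto_const_nhds.mul (hlim.pow j))
  exact le_of_tendsto hlim2 (Filter.Eventually.of_forall hkey)


/-- The iterate `φ^j` at `x`, as a polynomial in the parameter shift `z = b - a`. -/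
noncomputable def pvsTheta {K : Type*} [Field K] (p : ℕ) (a x : K) : ℕ → K[X]
  | 0 => Polynomial.C x
  | j + 1 => (Polynomial.C (1 - a) - Polynomial.X) * (pvsTheta p a x j) ^ (p + 1) +
      (Polynomial.C a + Polynomial.X) * (pvsTheta p a x j) ^ p

lemma pvsTheta_succ {K : Type*} [Field K] (p : ℕ) (a x : K) (j : ℕ) :
    pvsTheta p a x (j + 1) = (Polynomial.C (1 - a) - Polynomial.X) * (pvsTheta p a x j) ^ (p + 1) +
      (Polynomial.C a + Polynomial.X) * (pvsTheta p a x j) ^ p := rfl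

lemma pvsTheta_eval {K : Type*} [Field K] (p : ℕ) (a x z : K) :
    ∀ j, (pvsTheta p a x j).eval z = (phi p (a + z))^[j] x := by
  intro j
  induction j with
  | zero => simp [pvsTheta]
  | succ j ih =>
    rw [Function.iterate_succ_apply', ← ih, pvsTheta_succ]
    simp only [eval_add, eval_mul, eval_sub, eval_pow, eval_C, eval_X, phi]
    ring

section H2
variable {K : Type*} [NontriviallyNormedField K] [IsUltrametricDist K]

lemma pvs_eval_sub_coeff_zero (P : K[X]) {e D : ℝ} (he : 0 ≤ e) (hD : 0 ≤ D)
    (h : ∀ j, 1 ≤ j → ‖P.coeff j‖ * e ^ j ≤ D) {z : K} (hz : ‖z‖ ≤ e) :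
    ‖P.eval z - P.coeff 0‖ ≤ D := by
  have hN : P.natDegree < P.natDegree + 1 := Nat.lt_succ_self _
  rw [eval_eq_sum_range' hN z]
  rw [Finset.range_eq_Ico, Finset.sum_eq_sum_Ico_succ_bot (by omega : 0 < P.natDegree + 1)]
  simp only [pow_zero, mul_one]
  rw [add_sub_cancel_left]
  apply pvs_sum_le hD
  intro i hi
  have hi1 : 1 ≤ i := (Finset.mem_Ico.1 hi).1
  rw [norm_mul, norm_pow]
  calc ‖P.coeff i‖ * ‖z‖ ^ i ≤ ‖P.coeff i‖ * e ^ i := by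
        apply mul_le_mul_of_nonneg_left (pow_le_pow_left₀ (norm_nonneg _) hz i) (norm_nonneg _)
    _ ≤ D := h i hi1

lemma pvs_diff_factor (P : K[X]) {e C : ℝ} (he : 0 < e) (hC : 0 ≤ C)
    (h2 : ∀ j, 2 ≤ j → ‖P.coeff j‖ * e ^ j ≤ C) {z z' : K} (hz : ‖z‖ ≤ e) (hz' : ‖z'‖ ≤ e) :
    ∃ E : K, P.eval z - P.eval z' = (z - z') * (P.coeff 1 + E) ∧ ‖E‖ * e ≤ C := by
  classical
  set N := P.natDegree + 2 with hNdef
  set G : ℕ → K := fun jj => ∑ i ∈ Finset.range jj, z ^ i * z' ^ (jj - 1 - i) with hGdef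
  have hid : P.eval z - P.eval z' = (z - z') * ∑ jj ∈ Finset.range N, P.coeff jj * G jj := by
    rw [eval_eq_sum_range' (by omega : P.natDegree < N) z,
      eval_eq_sum_range' (by omega : P.natDegree < N) z', ← Finset.sum_sub_distrib,
      Finset.mul_sum]
    apply Finset.sum_congr rfl
    intro jj _
    have hgeom := geom_sum₂_mul z z' jj
    calc P.coeff jj * z ^ jj - P.coeff jj * z' ^ jj = P.coeff jj * (z ^ jj - z' ^ jj) := by ring
      _ = P.coeff jj * (G jj * (z - z')) := by rw [← hgeom]
      _ = (z - z') * (P.coeff jj * G jj) := by ring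
  have hsplit : (∑ jj ∈ Finset.range N, P.coeff jj * G jj) =
      P.coeff 1 + ∑ jj ∈ Finset.Ico 2 N, P.coeff jj * G jj := by
    rw [Finset.range_eq_Ico, Finset.sum_eq_sum_Ico_succ_bot (by omega : 0 < N),
      Finset.sum_eq_sum_Ico_succ_bot (by omega : 1 < N)]
    have hG0 : G 0 = 0 := by simp [hGdef]
    have hG1 : G 1 = 1 := by simp [hGdef]
    rw [hG0, hG1]
    ring
  refine ⟨∑ jj ∈ Finset.Ico 2 N, P.coeff jj * G jj, ?_, ?_⟩
  · rw [hid, hsplit]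
  · rw [← le_div_iff₀ he]
    apply pvs_sum_le (by positivity)
    intro jj hjj
    have hjj2 : 2 ≤ jj := (Finset.mem_Ico.1 hjj).1
    have hGb : ‖G jj‖ ≤ e ^ (jj - 1) := by
      apply pvs_sum_le (by positivity)
      intro i hi
      have hi' : i < jj := Finset.mem_range.1 hi
      rw [norm_mul, norm_pow, norm_pow]
      calc ‖z‖ ^ i * ‖z'‖ ^ (jj - 1 - i) ≤ e ^ i * e ^ (jj - 1 - i) := by
            apply mul_le_mul (pow_le_pow_left₀ (norm_nonneg _) hz i)
              (pow_le_pow_left₀ (norm_nonneg _) hz' _) (by positivity) (by positivity)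
        _ = e ^ (jj - 1) := by rw [← pow_add]; congr 1; omega
    rw [norm_mul, le_div_iff₀ he]
    calc ‖P.coeff jj‖ * ‖G jj‖ * e ≤ ‖P.coeff jj‖ * e ^ (jj - 1) * e := by
          apply mul_le_mul_of_nonneg_right
            (mul_le_mul_of_nonneg_left hGb (norm_nonneg _)) he.le
      _ = ‖P.coeff jj‖ * e ^ jj := by
          rw [mul_assoc, ← pow_succ]; congr 2; omega
      _ ≤ C := h2 jj hjj2

/-- Coefficient bounds for powers `T^q` around the constant coefficient. -/
lemma pvs_Tq_bound {T : K[X]} {e rT DT : ℝ} (he : 0 < e)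
    (hs : ‖T.coeff 0‖ = rT) (hDT0 : 0 ≤ DT) (hDTr : DT ≤ rT)
    (hj : ∀ j, 1 ≤ j → ‖T.coeff j‖ * e ^ j ≤ DT) :
    ∀ q : ℕ, 2 ≤ q → ∀ j, 1 ≤ j → ‖(T ^ q).coeff j‖ * e ^ j ≤
      max (‖((q : ℕ) : K)‖ * (rT ^ (q - 1) * DT)) (rT ^ (q - 2) * DT ^ 2) := by
  classical
  intro q hq j hj1
  have hrT0 : 0 ≤ rT := hs ▸ norm_nonneg _
  set s : K := T.coeff 0 with hsdef
  set T₁ : K[X] := T - Polynomial.C s with hT₁def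
  have hTeq : T = Polynomial.C s + T₁ := by rw [hT₁def]; ring
  have hT₁j : ∀ i, ‖T₁.coeff i‖ * e ^ i ≤ DT := by
    intro i
    rcases Nat.eq_zero_or_pos i with h0 | h1
    · subst h0; simp [hT₁def, coeff_sub, hDT0, hsdef]
    · rw [hT₁def, coeff_sub, coeff_C, if_neg (by omega)]
      simpa using hj i h1
  have hpowb := pvs_pow_coeff_bound he hT₁j
  have hmb : (0:ℝ) ≤ max (‖((q : ℕ) : K)‖ * (rT ^ (q - 1) * DT)) (rT ^ (q - 2) * DT ^ 2) := by
    positivity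
  conv_lhs => rw [hTeq, add_pow]
  rw [finset_sum_coeff, ← le_div_iff₀ (by positivity)]
  apply pvs_sum_le (by positivity)
  intro i hi
  have hiq : i ≤ q := by
    have := Finset.mem_range.1 hi; omega
  have hterm : ((Polynomial.C s) ^ i * T₁ ^ (q - i) * ((q.choose i : ℕ) : K[X])).coeff j =
      s ^ i * (T₁ ^ (q - i)).coeff j * ((q.choose i : ℕ) : K) := by
    rw [← Polynomial.C_pow, ← Polynomial.C_eq_natCast, Polynomial.coeff_mul_C,
      Polynomial.coeff_C_mul]
  rw [hterm, le_div_iff₀ (by positivity)]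
  by_cases hiq' : i = q
  · subst hiq'
    rw [Nat.sub_self, pow_zero, Polynomial.coeff_one, if_neg (by omega)]
    simpa using hmb
  · have hd1 : 1 ≤ q - i := by omega
    have hnorm : ‖s ^ i * (T₁ ^ (q - i)).coeff j * ((q.choose i : ℕ) : K)‖ * e ^ j ≤
        rT ^ i * DT ^ (q - i) * ‖((q.choose i : ℕ) : K)‖ := by
      rw [norm_mul, norm_mul, norm_pow, hs]
      calc rT ^ i * ‖(T₁ ^ (q - i)).coeff j‖ * ‖((q.choose i : ℕ) : K)‖ * e ^ j
          = rT ^ i * ‖((q.choose i : ℕ) : K)‖ * (‖(T₁ ^ (q - i)).coeff j‖ * e ^ j) := by ring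
        _ ≤ rT ^ i * ‖((q.choose i : ℕ) : K)‖ * DT ^ (q - i) := by
            apply mul_le_mul_of_nonneg_left (hpowb (q - i) j) (by positivity)
        _ = rT ^ i * DT ^ (q - i) * ‖((q.choose i : ℕ) : K)‖ := by ring
    by_cases hd2 : q - i = 1
    · have hiq1 : i = q - 1 := by omega
      have hch : q.choose i = q := by
        rw [hiq1, Nat.choose_symm (by omega : 1 ≤ q), Nat.choose_one_right]
      apply le_trans hnorm
      apply le_max_of_le_left
      rw [hch, hd2, pow_one, hiq1]
      calc rT ^ (q-1) * DT * ‖((q : ℕ) : K)‖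
          = ‖((q : ℕ) : K)‖ * (rT ^ (q - 1) * DT) := by ring
        _ ≤ ‖((q : ℕ) : K)‖ * (rT ^ (q - 1) * DT) := le_refl _
    · have hd2' : 2 ≤ q - i := by omega
      apply le_trans hnorm
      apply le_max_of_le_right
      have hcast : ‖((q.choose i : ℕ) : K)‖ ≤ 1 := IsUltrametricDist.norm_natCast_le_one K _
      calc rT ^ i * DT ^ (q - i) * ‖((q.choose i : ℕ) : K)‖ ≤ rT ^ i * DT ^ (q - i) * 1 := by
            apply mul_le_mul_of_nonneg_left hcast (by positivity)
        _ = rT ^ i * (DT ^ 2 * DT ^ (q - i - 2)) := by rw [mul_one, ← pow_add]; congr 2; omega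
        _ ≤ rT ^ i * (DT ^ 2 * rT ^ (q - i - 2)) := by
            apply mul_le_mul_of_nonneg_left
              (mul_le_mul_of_nonneg_left (pow_le_pow_left₀ hDT0 hDTr _) (by positivity))
              (by positivity)
        _ = rT ^ (q - 2) * DT ^ 2 := by
            rw [show rT ^ (q-2) = rT ^ i * rT ^ (q - i - 2) by rw [← pow_add]; congr 1; omega]
            ring

end H2


section StepSec
variable {K : Type*} [NontriviallyNormedField K] [IsUltrametricDist K]

lemma pvs_four {w x y z : K} {M : ℝ} (hw : ‖w‖ ≤ M) (hx : ‖x‖ ≤ M) (hy : ‖y‖ ≤ M)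
    (hz : ‖z‖ ≤ M) : ‖w - x + (y + z)‖ ≤ M := by
  refine le_trans (pvs_add_le _ _) (max_le ?_ (le_trans (pvs_add_le _ _) (max_le hy hz)))
  rw [sub_eq_add_neg]
  refine le_trans (pvs_add_le _ _) (max_le hw ?_)
  rwa [norm_neg]

/-- One iteration step: coefficient estimates for
`T' = (C (1-a) - X) * T^(p+1) + (C a + X) * T^p`. -/
lemma pvs_step (p : ℕ) (hp2 : 2 ≤ p) (a : K) {e rk Dk : ℝ} (he : 0 < e)
    (ha1 : 1 < ‖a‖) (h1a : ‖1 - a‖ = ‖a‖)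
    (hrk0 : 0 < rk) (hrk1 : rk < 1)
    (hple1 : ‖((p : ℕ) : K)‖ ≤ 1)
    (hea : e ≤ ‖a‖) (heM : e ≤ ‖a‖ * max rk ‖((p : ℕ) : K)‖)
    (hDk0 : 0 < Dk) (hDkr : Dk ≤ rk * max rk ‖((p : ℕ) : K)‖)
    (T : K[X]) (h0 : ‖T.coeff 0‖ = rk) (hj : ∀ j, 1 ≤ j → ‖T.coeff j‖ * e ^ j ≤ Dk) :
    ‖((Polynomial.C (1 - a) - Polynomial.X) * T ^ (p + 1) +
        (Polynomial.C a + Polynomial.X) * T ^ p).coeff 0‖ = ‖a‖ * rk ^ p ∧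
    (∀ j, 1 ≤ j → ‖((Polynomial.C (1 - a) - Polynomial.X) * T ^ (p + 1) +
        (Polynomial.C a + Polynomial.X) * T ^ p).coeff j‖ * e ^ j ≤
        max (‖a‖ * rk ^ (p - 1) * max rk ‖((p : ℕ) : K)‖ * Dk) (e * rk ^ p)) ∧
    (∀ j, 2 ≤ j → ‖((Polynomial.C (1 - a) - Polynomial.X) * T ^ (p + 1) +
        (Polynomial.C a + Polynomial.X) * T ^ p).coeff j‖ * e ^ j ≤
        ‖a‖ * rk ^ (p - 1) * max rk ‖((p : ℕ) : K)‖ * Dk) ∧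
    ‖((Polynomial.C (1 - a) - Polynomial.X) * T ^ (p + 1) +
        (Polynomial.C a + Polynomial.X) * T ^ p).coeff 1 -
        (T.coeff 0) ^ p * (1 - T.coeff 0)‖ * e ≤
        ‖a‖ * rk ^ (p - 1) * max rk ‖((p : ℕ) : K)‖ * Dk := by
  classical
  set M1 : ℝ := max rk ‖((p : ℕ) : K)‖ with hM1def
  set MM : ℝ := ‖a‖ * rk ^ (p - 1) * M1 * Dk with hMMdef
  set T' : K[X] := (Polynomial.C (1 - a) - Polynomial.X) * T ^ (p + 1) +
      (Polynomial.C a + Polynomial.X) * T ^ p with hT'def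
  have ha0 : (0:ℝ) < ‖a‖ := lt_trans one_pos ha1
  have hM10 : 0 < M1 := lt_of_lt_of_le hrk0 (le_max_left _ _)
  have hM1le1 : M1 ≤ 1 := max_le hrk1.le hple1
  have hrkM : rk ≤ M1 := le_max_left _ _
  have hpM : ‖((p : ℕ) : K)‖ ≤ M1 := le_max_right _ _
  have hDkrk : Dk ≤ rk := le_trans hDkr (mul_le_of_le_one_right hrk0.le hM1le1)
  have hDkM1 : Dk ≤ M1 := le_trans hDkr (mul_le_of_le_one_left hM10.le hrk1.le)
  have hMM0 : 0 < MM := by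
    rw [hMMdef]; positivity
  have hX0 : (0:ℝ) < rk ^ (p - 1) := by positivity
  have hY0 : (0:ℝ) < rk ^ (p - 2) := by positivity
  have hrp1 : rk ^ p = rk ^ (p - 1) * rk := by rw [← pow_succ]; congr 1; omega
  have hrp2 : rk ^ (p - 1) = rk ^ (p - 2) * rk := by rw [← pow_succ]; congr 1; omega
  have heDk : e * Dk ≤ ‖a‖ * (rk * M1) := by
    calc e * Dk ≤ ‖a‖ * Dk := mul_le_mul_of_nonneg_right hea hDk0.le
      _ ≤ ‖a‖ * (rk * M1) := mul_le_mul_of_nonneg_left hDkr ha0.le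
  -- the eight comparisons
  have ca1 : ‖a‖ * (rk ^ p * Dk) ≤ MM := by
    calc ‖a‖ * (rk ^ p * Dk) = ‖a‖ * rk ^ (p - 1) * Dk * rk := by rw [hrp1]; ring
      _ ≤ ‖a‖ * rk ^ (p - 1) * Dk * M1 :=
          mul_le_mul_of_nonneg_left hrkM (by positivity)
      _ = MM := by rw [hMMdef]; ring
  have ca2 : ‖a‖ * (rk ^ (p - 1) * Dk ^ 2) ≤ MM := by
    calc ‖a‖ * (rk ^ (p - 1) * Dk ^ 2) = ‖a‖ * rk ^ (p - 1) * Dk * Dk := by ring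
      _ ≤ ‖a‖ * rk ^ (p - 1) * Dk * M1 := mul_le_mul_of_nonneg_left hDkM1 (by positivity)
      _ = MM := by rw [hMMdef]; ring
  have ca3 : ‖a‖ * (‖((p : ℕ) : K)‖ * (rk ^ (p - 1) * Dk)) ≤ MM := by
    calc ‖a‖ * (‖((p : ℕ) : K)‖ * (rk ^ (p - 1) * Dk))
        = ‖a‖ * rk ^ (p - 1) * Dk * ‖((p : ℕ) : K)‖ := by ring
      _ ≤ ‖a‖ * rk ^ (p - 1) * Dk * M1 := mul_le_mul_of_nonneg_left hpM (by positivity)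
      _ = MM := by rw [hMMdef]; ring
  have ca4 : ‖a‖ * (rk ^ (p - 2) * Dk ^ 2) ≤ MM := by
    calc ‖a‖ * (rk ^ (p - 2) * Dk ^ 2) = ‖a‖ * rk ^ (p - 2) * Dk * Dk := by ring
      _ ≤ ‖a‖ * rk ^ (p - 2) * Dk * (rk * M1) :=
          mul_le_mul_of_nonneg_left hDkr (by positivity)
      _ = MM := by rw [hMMdef, hrp2]; ring
  have ce1 : e * (rk ^ p * Dk) ≤ MM := by
    have h1 : e * rk ≤ ‖a‖ * M1 := le_trans (mul_le_of_le_one_right he.le hrk1.le) heM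
    calc e * (rk ^ p * Dk) = rk ^ (p - 1) * Dk * (e * rk) := by rw [hrp1]; ring
      _ ≤ rk ^ (p - 1) * Dk * (‖a‖ * M1) := mul_le_mul_of_nonneg_left h1 (by positivity)
      _ = MM := by rw [hMMdef]; ring
  have ce2 : e * (rk ^ (p - 1) * Dk ^ 2) ≤ MM := by
    calc e * (rk ^ (p - 1) * Dk ^ 2) = rk ^ (p - 2) * Dk * rk * (e * Dk) := by
          rw [hrp2]; ring
      _ ≤ rk ^ (p - 2) * Dk * rk * (‖a‖ * (rk * M1)) :=
          mul_le_mul_of_nonneg_left heDk (by positivity)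
      _ = ‖a‖ * rk ^ (p - 2) * Dk * rk * M1 * rk := by ring
      _ ≤ ‖a‖ * rk ^ (p - 2) * Dk * rk * M1 * 1 :=
          mul_le_mul_of_nonneg_left hrk1.le (by positivity)
      _ = MM := by rw [hMMdef, hrp2]; ring
  have ce3 : e * (‖((p : ℕ) : K)‖ * (rk ^ (p - 1) * Dk)) ≤ MM := by
    have h1 : e * ‖((p : ℕ) : K)‖ ≤ ‖a‖ * M1 :=
      le_trans (mul_le_of_le_one_right he.le hple1) heM
    calc e * (‖((p : ℕ) : K)‖ * (rk ^ (p - 1) * Dk))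
        = rk ^ (p - 1) * Dk * (e * ‖((p : ℕ) : K)‖) := by ring
      _ ≤ rk ^ (p - 1) * Dk * (‖a‖ * M1) := mul_le_mul_of_nonneg_left h1 (by positivity)
      _ = MM := by rw [hMMdef]; ring
  have ce4 : e * (rk ^ (p - 2) * Dk ^ 2) ≤ MM := by
    calc e * (rk ^ (p - 2) * Dk ^ 2) = rk ^ (p - 2) * Dk * (e * Dk) := by ring
      _ ≤ rk ^ (p - 2) * Dk * (‖a‖ * (rk * M1)) :=
          mul_le_mul_of_nonneg_left heDk (by positivity)
      _ = MM := by rw [hMMdef, hrp2]; ring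
  -- power bounds
  have hTq := pvs_Tq_bound he h0 hDk0.le hDkrk hj
  have hTpb : ∀ j, 1 ≤ j → ‖(T ^ p).coeff j‖ * e ^ j ≤
      max (‖((p : ℕ) : K)‖ * (rk ^ (p - 1) * Dk)) (rk ^ (p - 2) * Dk ^ 2) := hTq p hp2
  have hTp1b : ∀ j, 1 ≤ j → ‖(T ^ (p + 1)).coeff j‖ * e ^ j ≤
      max (rk ^ p * Dk) (rk ^ (p - 1) * Dk ^ 2) := by
    intro j hj1
    have h := hTq (p + 1) (by omega) j hj1
    have e1 : p + 1 - 1 = p := by omega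
    have e2 : p + 1 - 2 = p - 1 := by omega
    rw [e1, e2] at h
    refine le_trans h (max_le ?_ (le_max_right _ _))
    apply le_max_of_le_left
    have h1 : ‖((p + 1 : ℕ) : K)‖ ≤ 1 := IsUltrametricDist.norm_natCast_le_one K _
    exact mul_le_of_le_one_left (by positivity) h1
  -- piece bounds
  have hA1 : ∀ j, 1 ≤ j → ‖(1 - a) * (T ^ (p + 1)).coeff j‖ * e ^ j ≤ MM := by
    intro j hj1
    rw [norm_mul, h1a, mul_assoc]
    calc ‖a‖ * (‖(T ^ (p + 1)).coeff j‖ * e ^ j)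
        ≤ ‖a‖ * max (rk ^ p * Dk) (rk ^ (p - 1) * Dk ^ 2) := by
          exact mul_le_mul_of_nonneg_left (hTp1b j hj1) ha0.le
      _ = max (‖a‖ * (rk ^ p * Dk)) (‖a‖ * (rk ^ (p - 1) * Dk ^ 2)) := by
          rw [mul_max_of_nonneg _ _ ha0.le]
      _ ≤ MM := max_le ca1 ca2
  have hA3 : ∀ j, 1 ≤ j → ‖a * (T ^ p).coeff j‖ * e ^ j ≤ MM := by
    intro j hj1
    rw [norm_mul, mul_assoc]
    calc ‖a‖ * (‖(T ^ p).coeff j‖ * e ^ j)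
        ≤ ‖a‖ * max (‖((p : ℕ) : K)‖ * (rk ^ (p - 1) * Dk)) (rk ^ (p - 2) * Dk ^ 2) := by
          exact mul_le_mul_of_nonneg_left (hTpb j hj1) ha0.le
      _ = max (‖a‖ * (‖((p : ℕ) : K)‖ * (rk ^ (p - 1) * Dk)))
            (‖a‖ * (rk ^ (p - 2) * Dk ^ 2)) := by rw [mul_max_of_nonneg _ _ ha0.le]
      _ ≤ MM := max_le ca3 ca4
  have hE1 : ∀ j', 1 ≤ j' → ‖(T ^ (p + 1)).coeff j'‖ * e ^ (j' + 1) ≤ MM := by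
    intro j' hj1
    rw [pow_succ e j', ← mul_assoc]
    calc ‖(T ^ (p + 1)).coeff j'‖ * e ^ j' * e
        ≤ max (rk ^ p * Dk) (rk ^ (p - 1) * Dk ^ 2) * e := by
          exact mul_le_mul_of_nonneg_right (hTp1b j' hj1) he.le
      _ = max (e * (rk ^ p * Dk)) (e * (rk ^ (p - 1) * Dk ^ 2)) := by
          rw [max_mul_of_nonneg _ _ he.le]; ring_nf
      _ ≤ MM := max_le ce1 ce2
  have hE3 : ∀ j', 1 ≤ j' → ‖(T ^ p).coeff j'‖ * e ^ (j' + 1) ≤ MM := by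
    intro j' hj1
    rw [pow_succ e j', ← mul_assoc]
    calc ‖(T ^ p).coeff j'‖ * e ^ j' * e
        ≤ max (‖((p : ℕ) : K)‖ * (rk ^ (p - 1) * Dk)) (rk ^ (p - 2) * Dk ^ 2) * e := by
          exact mul_le_mul_of_nonneg_right (hTpb j' hj1) he.le
      _ = max (e * (‖((p : ℕ) : K)‖ * (rk ^ (p - 1) * Dk))) (e * (rk ^ (p - 2) * Dk ^ 2)) := by
          rw [max_mul_of_nonneg _ _ he.le]; ring_nf
      _ ≤ MM := max_le ce3 ce4
  -- coefficient formula
  have hcoeff : ∀ j', T'.coeff (j' + 1) = (1 - a) * (T ^ (p + 1)).coeff (j' + 1) -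
      (T ^ (p + 1)).coeff j' + (a * (T ^ p).coeff (j' + 1) + (T ^ p).coeff j') := by
    intro j'
    rw [hT'def]
    rw [coeff_add, sub_mul, add_mul, coeff_sub, coeff_add, coeff_C_mul, coeff_C_mul,
      coeff_X_mul, coeff_X_mul]
  have hpow0 : ∀ q : ℕ, (T ^ q).coeff 0 = T.coeff 0 ^ q := by
    intro q
    rw [coeff_zero_eq_eval_zero, eval_pow, ← coeff_zero_eq_eval_zero]
  -- coefficient 0
  have hc0 : T'.coeff 0 = (1 - a) * T.coeff 0 ^ (p + 1) + a * T.coeff 0 ^ p := by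
    rw [coeff_zero_eq_eval_zero, hT'def]
    simp only [eval_add, eval_mul, eval_sub, eval_pow, eval_C, eval_X, sub_zero, add_zero,
      ← coeff_zero_eq_eval_zero]
  have goal0 : ‖T'.coeff 0‖ = ‖a‖ * rk ^ p := by
    rw [hc0, add_comm]
    have hlt : ‖(1 - a) * T.coeff 0 ^ (p + 1)‖ < ‖a * T.coeff 0 ^ p‖ := by
      rw [norm_mul, norm_mul, norm_pow, norm_pow, h1a, h0]
      have h2 : rk ^ (p + 1) < rk ^ p := by
        rw [pow_succ]
        exact mul_lt_of_lt_one_right (pow_pos hrk0 p) hrk1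
      exact mul_lt_mul_of_pos_left h2 ha0
    rw [pvs_add_eq_left hlt, norm_mul, norm_pow, h0]
  -- coefficient 1, exact part
  have hc1 : T'.coeff 1 = T.coeff 0 ^ p * (1 - T.coeff 0) +
      ((1 - a) * (T ^ (p + 1)).coeff 1 + a * (T ^ p).coeff 1) := by
    have h := hcoeff 0
    rw [hpow0, hpow0] at h
    rw [h]; ring
  have goal1ex : ‖T'.coeff 1 - T.coeff 0 ^ p * (1 - T.coeff 0)‖ * e ≤ MM := by
    have heq : T'.coeff 1 - T.coeff 0 ^ p * (1 - T.coeff 0) =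
        (1 - a) * (T ^ (p + 1)).coeff 1 + a * (T ^ p).coeff 1 := by rw [hc1]; ring
    rw [heq, ← le_div_iff₀ he]
    refine le_trans (pvs_add_le _ _) (max_le ?_ ?_)
    · rw [le_div_iff₀ he]
      have := hA1 1 le_rfl
      rwa [pow_one] at this
    · rw [le_div_iff₀ he]
      have := hA3 1 le_rfl
      rwa [pow_one] at this
  -- coefficient j ≥ 2
  have goal2 : ∀ j, 2 ≤ j → ‖T'.coeff j‖ * e ^ j ≤ MM := by
    intro j hj2
    obtain ⟨j', rfl⟩ : ∃ j', j = j' + 1 := ⟨j - 1, by omega⟩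
    have hj'1 : 1 ≤ j' := by omega
    rw [hcoeff j', ← le_div_iff₀ (by positivity : (0:ℝ) < e ^ (j' + 1))]
    apply pvs_four
    · rw [le_div_iff₀ (by positivity)]; exact hA1 (j' + 1) (by omega)
    · rw [le_div_iff₀ (by positivity)]; exact hE1 j' hj'1
    · rw [le_div_iff₀ (by positivity)]; exact hA3 (j' + 1) (by omega)
    · rw [le_div_iff₀ (by positivity)]; exact hE3 j' hj'1
  -- coefficient 1, generic bound
  have goal1gen : ∀ j, 1 ≤ j → ‖T'.coeff j‖ * e ^ j ≤ max MM (e * rk ^ p) := by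
    intro j hj1
    rcases Nat.lt_or_ge j 2 with hj2 | hj2
    · have hj1' : j = 1 := by omega
      subst hj1'
      have h1 : ‖T.coeff 0 ^ p * (1 - T.coeff 0)‖ ≤ rk ^ p := by
        rw [norm_mul, norm_pow, h0]
        have h2 : ‖(1 : K) - T.coeff 0‖ ≤ 1 := by
          rw [sub_eq_add_neg, add_comm]
          refine le_trans (pvs_add_le _ _) (max_le ?_ ?_)
          · rw [norm_neg, h0]; exact hrk1.le
          · rw [norm_one]
        exact mul_le_of_le_one_right (by positivity) h2
      have heq : T'.coeff 1 = T.coeff 0 ^ p * (1 - T.coeff 0) +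
          (T'.coeff 1 - T.coeff 0 ^ p * (1 - T.coeff 0)) := by ring
      have h3 : ‖T'.coeff 1‖ ≤ max ‖T.coeff 0 ^ p * (1 - T.coeff 0)‖
          ‖T'.coeff 1 - T.coeff 0 ^ p * (1 - T.coeff 0)‖ := by
        conv_lhs => rw [heq]
        exact pvs_add_le _ _
      calc ‖T'.coeff 1‖ * e ^ 1
          ≤ max ‖T.coeff 0 ^ p * (1 - T.coeff 0)‖
              ‖T'.coeff 1 - T.coeff 0 ^ p * (1 - T.coeff 0)‖ * e ^ 1 :=
            mul_le_mul_of_nonneg_right h3 (by positivity)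
        _ = max (‖T.coeff 0 ^ p * (1 - T.coeff 0)‖ * e ^ 1)
              (‖T'.coeff 1 - T.coeff 0 ^ p * (1 - T.coeff 0)‖ * e ^ 1) :=
            max_mul_of_nonneg _ _ (by positivity)
        _ ≤ max (e * rk ^ p) MM := by
            apply max_le_max
            · rw [pow_one, mul_comm e (rk ^ p)]
              exact mul_le_mul_of_nonneg_right h1 he.le
            · rw [pow_one]
              exact goal1ex
        _ = max MM (e * rk ^ p) := max_comm _ _
    · exact le_max_of_le_left (goal2 j hj2)
  exact ⟨goal0, goal1gen, goal2, goal1ex⟩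

end StepSec


noncomputable def pvs_t (p m k : ℕ) : ℝ := (p : ℝ) ^ ((k : ℤ) - (m : ℤ))

noncomputable def pvs_r (R : ℝ) (p m k : ℕ) : ℝ := R ^ ((1 : ℝ) - pvs_t p m k)

section Num

variable {p m : ℕ} {α R : ℝ}

lemma pvs_t_pos (hp2 : 2 ≤ p) (k : ℕ) : 0 < pvs_t p m k :=
  zpow_pos (by positivity) _

lemma pvs_t_succ (hp2 : 2 ≤ p) (k : ℕ) : pvs_t p m (k + 1) = p * pvs_t p m k := by
  unfold pvs_t
  have hppne : ((p : ℝ)) ≠ 0 := by positivity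
  rw [show ((k + 1 : ℕ) : ℤ) - (m : ℤ) = ((k : ℤ) - (m : ℤ)) + 1 by push_cast; ring,
    zpow_add₀ hppne, zpow_one]
  ring

lemma pvs_t_m : pvs_t p m m = 1 := by unfold pvs_t; simp

lemma pvs_t_le (hp2 : 2 ≤ p) {k : ℕ} (hk : k ≤ m) : pvs_t p m k ≤ 1 := by
  have h1 : (1 : ℝ) ≤ (p : ℝ) := by
    have : (2 : ℝ) ≤ (p : ℝ) := by exact_mod_cast hp2
    linarith
  calc pvs_t p m k ≤ pvs_t p m m := by
        unfold pvs_t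
        exact zpow_le_zpow_right₀ h1 (by omega)
    _ = 1 := pvs_t_m

lemma pvs_t_lt (hp2 : 2 ≤ p) {k : ℕ} (hk : k < m) : pvs_t p m k < 1 := by
  have h1 := pvs_t_le hp2 (by omega : k + 1 ≤ m)
  rw [pvs_t_succ hp2] at h1
  have h2 := pvs_t_pos (m := m) hp2 k
  have hpp2 : (2 : ℝ) ≤ (p : ℝ) := by exact_mod_cast hp2
  nlinarith

variable (hp2 : 2 ≤ p) (hα1 : 1 < α) (hRdef : R = α ^ (-(1 : ℝ) / ((p : ℝ) - 1)))
include hp2 hα1 hRdef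

lemma pvs_ccp : (-(1 : ℝ) / ((p : ℝ) - 1)) * ((p : ℝ) - 1) = -1 := by
  have hpp2 : (2 : ℝ) ≤ (p : ℝ) := by exact_mod_cast hp2
  exact div_mul_cancel₀ _ (by linarith : (p : ℝ) - 1 ≠ 0)

lemma pvs_ccneg : (-(1 : ℝ) / ((p : ℝ) - 1)) < 0 := by
  have hpp2 : (2 : ℝ) ≤ (p : ℝ) := by exact_mod_cast hp2
  apply div_neg_of_neg_of_pos (by norm_num) (by linarith)

lemma pvs_ccm1 : -1 ≤ (-(1 : ℝ) / ((p : ℝ) - 1)) := by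
  have hpp2 : (2 : ℝ) ≤ (p : ℝ) := by exact_mod_cast hp2
  have h1 := pvs_ccp (α := α) (R := R) hp2 hα1 hRdef
  nlinarith [pvs_ccneg (α := α) (R := R) hp2 hα1 hRdef]

lemma pvs_R_pos : 0 < R := by
  rw [hRdef]; positivity

lemma pvs_R_lt1 : R < 1 := by
  rw [hRdef]
  exact Real.rpow_lt_one_of_one_lt_of_neg hα1 (pvs_ccneg (α := α) (R := R) hp2 hα1 hRdef)

lemma pvs_conv (y : ℝ) : R ^ y = α ^ ((-(1 : ℝ) / ((p : ℝ) - 1)) * y) := by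
  rw [hRdef]
  exact (Real.rpow_mul (by linarith : (0:ℝ) ≤ α) _ _).symm

lemma pvs_r_pos (k : ℕ) : 0 < pvs_r R p m k :=
  Real.rpow_pos_of_pos (pvs_R_pos hp2 hα1 hRdef) _

lemma pvs_r_le1 {k : ℕ} (hk : k ≤ m) : pvs_r R p m k ≤ 1 :=
  Real.rpow_le_one (pvs_R_pos hp2 hα1 hRdef).le (pvs_R_lt1 hp2 hα1 hRdef).le
    (by linarith [pvs_t_le (m := m) hp2 hk])

lemma pvs_r_lt1 {k : ℕ} (hk : k < m) : pvs_r R p m k < 1 :=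
  Real.rpow_lt_one (pvs_R_pos hp2 hα1 hRdef).le (pvs_R_lt1 hp2 hα1 hRdef)
    (by linarith [pvs_t_lt (m := m) hp2 hk])

lemma pvs_R_le_r (k : ℕ) : R ≤ pvs_r R p m k := by
  have h := Real.rpow_le_rpow_of_exponent_ge (pvs_R_pos hp2 hα1 hRdef)
    (pvs_R_lt1 hp2 hα1 hRdef).le
    (by linarith [pvs_t_pos (m := m) hp2 k] : (1 : ℝ) - pvs_t p m k ≤ 1)
  rwa [Real.rpow_one] at h

lemma pvs_rec (k : ℕ) : α * pvs_r R p m k ^ p = pvs_r R p m (k + 1) := by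
  have hα0 : (0:ℝ) < α := by linarith
  have hR0 := pvs_R_pos hp2 hα1 hRdef
  unfold pvs_r
  rw [← Real.rpow_natCast (R ^ ((1 : ℝ) - pvs_t p m k)) p, ← Real.rpow_mul hR0.le,
    pvs_conv hp2 hα1 hRdef, pvs_conv hp2 hα1 hRdef]
  rw [show α * α ^ ((-(1 : ℝ) / ((p : ℝ) - 1)) * (((1 : ℝ) - pvs_t p m k) * (p : ℕ))) =
      α ^ (1 + (-(1 : ℝ) / ((p : ℝ) - 1)) * (((1 : ℝ) - pvs_t p m k) * (p : ℕ))) by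
    rw [Real.rpow_add hα0, Real.rpow_one]]
  congr 1
  rw [pvs_t_succ hp2]
  push_cast
  linear_combination pvs_ccp (α := α) (R := R) hp2 hα1 hRdef

lemma pvs_r_m : pvs_r R p m m = 1 := by
  unfold pvs_r
  rw [pvs_t_m, sub_self, Real.rpow_zero]

lemma pvs_rmB (hm : 1 ≤ m) : pvs_r R p m (m - 1) ^ p = α⁻¹ := by
  have h := pvs_rec (m := m) hp2 hα1 hRdef (m - 1)
  rw [show m - 1 + 1 = m by omega, pvs_r_m hp2 hα1 hRdef] at h
  exact ((inv_eq_of_mul_eq_one_right h).symm)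

lemma pvs_ar (k : ℕ) : α * pvs_r R p m k ^ (p - 1) = α ^ (pvs_t p m k) := by
  have hα0 : (0:ℝ) < α := by linarith
  have hR0 := pvs_R_pos hp2 hα1 hRdef
  unfold pvs_r
  rw [← Real.rpow_natCast (R ^ ((1 : ℝ) - pvs_t p m k)) (p - 1), ← Real.rpow_mul hR0.le,
    pvs_conv hp2 hα1 hRdef]
  rw [show α * α ^ ((-(1 : ℝ) / ((p : ℝ) - 1)) * (((1 : ℝ) - pvs_t p m k) * ((p - 1 : ℕ) : ℝ))) =
      α ^ (1 + (-(1 : ℝ) / ((p : ℝ) - 1)) * (((1 : ℝ) - pvs_t p m k) * ((p - 1 : ℕ) : ℝ))) by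
    rw [Real.rpow_add hα0, Real.rpow_one]]
  congr 1
  rw [show ((p - 1 : ℕ) : ℝ) = (p : ℝ) - 1 by
    have : (1 : ℕ) ≤ p := by omega
    push_cast [this]; ring]
  linear_combination (1 - pvs_t p m k) * pvs_ccp (α := α) (R := R) hp2 hα1 hRdef

lemma pvs_Rnegt_ge1 (y : ℝ) (hy : 0 ≤ y) : 1 ≤ R ^ (-y) := by
  have h := Real.rpow_le_rpow_of_exponent_ge (pvs_R_pos hp2 hα1 hRdef)
    (pvs_R_lt1 hp2 hα1 hRdef).le (by linarith : -y ≤ 0)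
  rwa [Real.rpow_zero] at h

lemma pvs_gWlem (k : ℕ) {μ Np : ℝ} (hNp : Np ≤ μ) (hRμ : R ≤ μ) (hμ0 : 0 < μ) :
    (α * pvs_r R p m k ^ (p - 1) * max (pvs_r R p m k) Np) *
      (μ ^ k * R ^ (-(2 * pvs_t p m k))) ≤ μ ^ (k + 1) * R ^ (-(2 * pvs_t p m (k + 1))) := by
  have hα0 : (0:ℝ) < α := by linarith
  have hR0 := pvs_R_pos hp2 hα1 hRdef
  have ht0 := pvs_t_pos (m := m) hp2 k
  have hmax : max (pvs_r R p m k) Np ≤ μ * R ^ (-(pvs_t p m k)) := by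
    apply max_le
    · unfold pvs_r
      rw [show (1 : ℝ) - pvs_t p m k = 1 + (-(pvs_t p m k)) by ring, Real.rpow_add hR0,
        Real.rpow_one]
      exact mul_le_mul_of_nonneg_right hRμ (Real.rpow_pos_of_pos hR0 _).le
    · calc Np ≤ μ := hNp
        _ = μ * 1 := (mul_one μ).symm
        _ ≤ μ * R ^ (-(pvs_t p m k)) := by
            exact mul_le_mul_of_nonneg_left
              (pvs_Rnegt_ge1 hp2 hα1 hRdef _ ht0.le) hμ0.le
  calc (α * pvs_r R p m k ^ (p - 1) * max (pvs_r R p m k) Np) *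
        (μ ^ k * R ^ (-(2 * pvs_t p m k)))
      ≤ (α * pvs_r R p m k ^ (p - 1) * (μ * R ^ (-(pvs_t p m k)))) *
        (μ ^ k * R ^ (-(2 * pvs_t p m k))) := by
        apply mul_le_mul_of_nonneg_right _ (by positivity)
        apply mul_le_mul_of_nonneg_left hmax
        have := pvs_r_pos (m := m) (k := k) hp2 hα1 hRdef
        positivity
    _ = μ ^ (k + 1) * (α ^ (pvs_t p m k) *
          (R ^ (-(pvs_t p m k)) * R ^ (-(2 * pvs_t p m k)))) := by
        rw [← pvs_ar hp2 hα1 hRdef k]; ring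
    _ ≤ μ ^ (k + 1) * R ^ (-(2 * pvs_t p m (k + 1))) := by
        apply mul_le_mul_of_nonneg_left _ (by positivity)
        rw [← Real.rpow_add hR0, pvs_conv hp2 hα1 hRdef, pvs_conv hp2 hα1 hRdef,
          ← Real.rpow_add hα0, pvs_t_succ hp2]
        apply Real.rpow_le_rpow_of_exponent_le hα1.le
        have hccp := pvs_ccp (α := α) (R := R) hp2 hα1 hRdef
        have hccm1 := pvs_ccm1 (α := α) (R := R) hp2 hα1 hRdef
        set cc := (-(1 : ℝ) / ((p : ℝ) - 1)) with hccdef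
        have hpp2 : (2:ℝ) ≤ (p:ℝ) := by exact_mod_cast hp2
        nlinarith [ht0, hccm1, hccp]

end Num


/-- Parameter-variation lemma just outside `D̄_R(0)`: if `|φ_a^n(x)| = R^{1-p^{-m}}`,
`A > |a|^{-1}`, `0 < ε ≤ A^{-1}S`, the image `{φ_b^n(x) : b ∈ D̄_ε(a)}` is contained in
`D̄_{Aε}(φ_a^n(x))`, and `μ^m < A^{-1}R^{p+1}`, then `b ↦ φ_b^{n+m}(x)` maps `D̄_ε(a)`
bijectively onto `D̄_{ε/|a|}(φ_a^{n+m}(x))`. -/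
theorem parameter_variation_shrinking
    {K : Type*} [NontriviallyNormedField K] [IsUltrametricDist K]
    [CompleteSpace K] [IsAlgClosed K]
    (p : ℕ) (hp : p.Prime) (hpK : ‖(p : K)‖ < 1)
    (a : K) (ha : 1 < ‖a‖) (R μ S : ℝ)
    (hR : R = ‖a‖ ^ (-(1 : ℝ) / ((p : ℝ) - 1)))
    (hμ : μ = max ‖(p : K)‖ R) (hS : S = μ * R ^ 3)
    (m n : ℕ) (hm : 1 ≤ m) (x : K)
    (hx : ‖(phi p a)^[n] x‖ = R ^ ((1 : ℝ) - (p : ℝ) ^ (-(m : ℤ))))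
    (A : ℝ) (hA : ‖a‖⁻¹ < A) (ε : ℝ) (hε : 0 < ε) (hε' : ε ≤ A⁻¹ * S)
    (him : (fun b => (phi p b)^[n] x) '' Metric.closedBall a ε ⊆
      Metric.closedBall ((phi p a)^[n] x) (A * ε))
    (hμm : μ ^ m < A⁻¹ * R ^ (p + 1)) :
    Set.BijOn (fun b => (phi p b)^[n + m] x) (Metric.closedBall a ε)
      (Metric.closedBall ((phi p a)^[n + m] x) (ε / ‖a‖)) := by
  classical
  have hp2 : 2 ≤ p := hp.two_le
  have hα1 : 1 < ‖a‖ := ha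
  have hα0 : (0:ℝ) < ‖a‖ := lt_trans one_pos hα1
  have hR0 : 0 < R := pvs_R_pos hp2 hα1 hR
  have hR1 : R < 1 := pvs_R_lt1 hp2 hα1 hR
  have hμR : R ≤ μ := hμ ▸ le_max_right _ _
  have hμp : ‖(p : K)‖ ≤ μ := hμ ▸ le_max_left _ _
  have hμ0 : 0 < μ := lt_of_lt_of_le hR0 hμR
  have hμ1 : μ < 1 := by rw [hμ]; exact max_lt hpK hR1
  have hS0 : 0 < S := by rw [hS]; positivity
  have hSμ : S ≤ μ := by
    rw [hS]
    nlinarith [pow_pos hR0 3, pow_lt_one₀ hR0.le hR1 (three_ne_zero)]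
  have hA0 : 0 < A := lt_trans (inv_pos.2 hα0) hA
  have hiA : A⁻¹ < ‖a‖ := (inv_lt_comm₀ hA0 hα0).mpr hA
  have hAε : A * ε ≤ S := by
    calc A * ε ≤ A * (A⁻¹ * S) := mul_le_mul_of_nonneg_left hε' hA0.le
      _ = S := by field_simp
  have hεαS : ε < ‖a‖ * S := lt_of_le_of_lt hε'
    (by exact mul_lt_mul_of_pos_right hiA hS0)
  have hεαμ : ε < ‖a‖ * μ := lt_of_lt_of_le hεαS
    (mul_le_mul_of_nonneg_left hSμ hα0.le)
  have hεα : ε < ‖a‖ := lt_of_lt_of_le hεαμ (by nlinarith)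
  have hB0 : (0:ℝ) < ‖a‖⁻¹ := inv_pos.2 hα0
  have hB1 : ‖a‖⁻¹ < 1 := inv_lt_one_of_one_lt₀ hα1
  have hple1 : ‖((p:ℕ) : K)‖ ≤ 1 := hpK.le
  have h1a : ‖1 - a‖ = ‖a‖ := by
    rw [show (1 : K) - a = -a + 1 by ring]
    rw [pvs_add_eq_left (by rw [norm_neg, norm_one]; exact hα1)]
    exact norm_neg a
  -- abbreviations
  set rr : ℕ → ℝ := fun k => pvs_r R p m k with hrrdef
  set WW : ℕ → ℝ := fun k => μ ^ k * R ^ (-(2 * pvs_t p m k)) with hWWdef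
  set DD : ℕ → ℝ := fun k => max (A * ε * WW k) (ε * (rr k * ‖a‖⁻¹)) with hDDdef
  have hr_pos : ∀ k, 0 < rr k := fun k => pvs_r_pos hp2 hα1 hR k
  have hr_le1 : ∀ k, k ≤ m → rr k ≤ 1 := fun k hk => pvs_r_le1 hp2 hα1 hR hk
  have hr_lt1 : ∀ k, k < m → rr k < 1 := fun k hk => pvs_r_lt1 hp2 hα1 hR hk
  have hR_le_r : ∀ k, R ≤ rr k := fun k => pvs_R_le_r hp2 hα1 hR k
  have hrec : ∀ k, ‖a‖ * rr k ^ p = rr (k + 1) := fun k => pvs_rec hp2 hα1 hR k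
  have hW_pos : ∀ k, 0 < WW k := by
    intro k
    have := Real.rpow_pos_of_pos hR0 (-(2 * pvs_t p m k))
    simp only [hWWdef]
    positivity
  have hμmax : ∀ k, μ ≤ max (rr k) ‖((p:ℕ) : K)‖ := by
    intro k
    rw [hμ]
    exact max_le (le_max_right _ _) (le_trans (hR_le_r k) (le_max_left _ _))
  have hmaxle1 : ∀ k, k < m → max (rr k) ‖((p:ℕ) : K)‖ ≤ 1 :=
    fun k hk => max_le (hr_le1 k (by omega)) hple1
  have hεmax : ∀ k, ε ≤ ‖a‖ * max (rr k) ‖((p:ℕ) : K)‖ :=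
    fun k => le_trans hεαμ.le (mul_le_mul_of_nonneg_left (hμmax k) hα0.le)
  have hD_pos : ∀ k, 0 < DD k := by
    intro k
    apply lt_of_lt_of_le _ (le_max_right _ _)
    have := hr_pos k
    positivity
  have hW0 : 1 ≤ WW 0 := by
    simp only [hWWdef, pow_zero, one_mul]
    have ht0 := pvs_t_pos (m := m) hp2 0
    exact pvs_Rnegt_ge1 hp2 hα1 hR _ (by linarith)
  have hDr : ∀ k, k < m → DD k ≤ rr k * max (rr k) ‖((p:ℕ) : K)‖ := by
    intro k hk
    apply max_le
    · have h1 : A * ε * WW k ≤ S * WW k :=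
        mul_le_mul_of_nonneg_right hAε (hW_pos k).le
      have h2 : S * WW k ≤ μ * R := by
        rw [hS, hWWdef]
        have hRc : (R:ℝ) ^ (3:ℕ) * R ^ (-(2 * pvs_t p m k)) ≤ R := by
          have h3 : ((R:ℝ) ^ (3:ℕ)) * R ^ (-(2 * pvs_t p m k)) =
              R ^ ((3:ℝ) + -(2 * pvs_t p m k)) := by
            rw [← Real.rpow_natCast R 3, ← Real.rpow_add hR0]
            norm_num
          rw [h3]
          have h4 : R ^ ((3:ℝ) + -(2 * pvs_t p m k)) ≤ R ^ (1:ℝ) := by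
            apply Real.rpow_le_rpow_of_exponent_ge hR0 hR1.le
            have := pvs_t_le (m := m) hp2 (le_of_lt hk)
            linarith
          rwa [Real.rpow_one] at h4
        have hμk : μ * μ ^ k ≤ μ := by
          calc μ * μ ^ k ≤ μ * 1 := by
                apply mul_le_mul_of_nonneg_left _ hμ0.le
                exact pow_le_one₀ hμ0.le hμ1.le
            _ = μ := mul_one μ
        calc μ * R ^ 3 * (μ ^ k * R ^ (-(2 * pvs_t p m k)))
            = (μ * μ ^ k) * (R ^ (3:ℕ) * R ^ (-(2 * pvs_t p m k))) := by ring
          _ ≤ μ * R := by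
              apply mul_le_mul hμk hRc (by positivity) hμ0.le
      calc A * ε * WW k ≤ μ * R := le_trans h1 h2
        _ ≤ max (rr k) ‖((p:ℕ) : K)‖ * rr k :=
            mul_le_mul (hμmax k) (hR_le_r k) hR0.le (by positivity)
        _ = rr k * max (rr k) ‖((p:ℕ) : K)‖ := mul_comm _ _
    · have h1 : ε * ‖a‖⁻¹ < μ := by
        have h2 := mul_lt_mul_of_pos_right hεαμ hB0
        rwa [mul_comm ‖a‖ μ, mul_assoc, mul_inv_cancel₀ (ne_of_gt hα0), mul_one] at h2
      calc ε * (rr k * ‖a‖⁻¹) = rr k * (ε * ‖a‖⁻¹) := by ring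
        _ ≤ rr k * max (rr k) ‖((p:ℕ) : K)‖ :=
            mul_le_mul_of_nonneg_left (le_trans h1.le (hμmax k)) (hr_pos k).le
  have hgW : ∀ k, (‖a‖ * rr k ^ (p - 1) * max (rr k) ‖((p:ℕ) : K)‖) * WW k ≤ WW (k + 1) := by
    intro k
    simp only [hWWdef, hrrdef]
    exact pvs_gWlem hp2 hα1 hR k hμp hμR hμ0
  have hεrp : ∀ k, ε * rr k ^ p ≤ DD (k + 1) := by
    intro k
    have h1 : rr k ^ p = rr (k + 1) * ‖a‖⁻¹ := by
      have h2 := hrec k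
      field_simp
      linarith [h2]
    simp only [hDDdef]
    refine le_trans (le_of_eq ?_) (le_max_right _ _)
    rw [h1]
  have hgD : ∀ k, k < m →
      ‖a‖ * rr k ^ (p - 1) * max (rr k) ‖((p:ℕ) : K)‖ * DD k ≤ DD (k + 1) := by
    intro k hk
    have hg0 : (0:ℝ) ≤ ‖a‖ * rr k ^ (p - 1) * max (rr k) ‖((p:ℕ) : K)‖ := by
      have := hr_pos k
      positivity
    have hcomp : ‖a‖ * rr k ^ (p - 1) * max (rr k) ‖((p:ℕ) : K)‖ * rr k =
        rr (k + 1) * max (rr k) ‖((p:ℕ) : K)‖ := by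
      rw [← hrec k, show rr k ^ p = rr k ^ (p - 1) * rr k from by
        rw [← pow_succ]; congr 1; omega]
      ring
    simp only [hDDdef]
    rw [mul_max_of_nonneg _ _ hg0]
    apply max_le
    · refine le_trans ?_ (le_max_left _ _)
      calc ‖a‖ * rr k ^ (p - 1) * max (rr k) ‖((p:ℕ) : K)‖ * (A * ε * WW k)
          = (A * ε) * ((‖a‖ * rr k ^ (p - 1) * max (rr k) ‖((p:ℕ) : K)‖) * WW k) := by ring
        _ ≤ (A * ε) * WW (k + 1) := by
            apply mul_le_mul_of_nonneg_left (hgW k) (by positivity)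
        _ = A * ε * WW (k + 1) := by ring
    · refine le_trans ?_ (le_max_right _ _)
      calc ‖a‖ * rr k ^ (p - 1) * max (rr k) ‖((p:ℕ) : K)‖ * (ε * (rr k * ‖a‖⁻¹))
          = (‖a‖ * rr k ^ (p - 1) * max (rr k) ‖((p:ℕ) : K)‖ * rr k) * (ε * ‖a‖⁻¹) := by ring
        _ = rr (k + 1) * max (rr k) ‖((p:ℕ) : K)‖ * (ε * ‖a‖⁻¹) := by rw [hcomp]
        _ ≤ rr (k + 1) * 1 * (ε * ‖a‖⁻¹) := by
            apply mul_le_mul_of_nonneg_right _ (by positivity)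
            exact mul_le_mul_of_nonneg_left (hmaxle1 k hk) (hr_pos _).le
        _ = ε * (rr (k + 1) * ‖a‖⁻¹) := by ring
  -- the final quantitative bound
  have hWm : A * ε * WW m < ε * ‖a‖⁻¹ := by
    have hAμm : A * μ ^ m < R ^ (p + 1) := by
      have h1 := mul_lt_mul_of_pos_left hμm hA0
      rwa [← mul_assoc, mul_inv_cancel₀ (ne_of_gt hA0), one_mul] at h1
    have hWmval : WW m = μ ^ m * R ^ (-(2:ℝ)) := by
      simp only [hWWdef]
      rw [pvs_t_m]
      norm_num
    have hcomb : R ^ (p + 1) * R ^ (-(2:ℝ)) = ‖a‖⁻¹ := by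
      rw [show (R:ℝ) ^ (p + 1) = R ^ (((p + 1 : ℕ)):ℝ) from (Real.rpow_natCast R (p+1)).symm,
        ← Real.rpow_add hR0, pvs_conv hp2 hα1 hR,
        show ‖a‖⁻¹ = ‖a‖ ^ (-1 : ℝ) from (Real.rpow_neg_one _).symm]
      congr 1
      have hccp := pvs_ccp (α := ‖a‖) (R := R) hp2 hα1 hR
      push_cast
      linear_combination hccp
    calc A * ε * WW m = ε * ((A * μ ^ m) * R ^ (-(2:ℝ))) := by rw [hWmval]; ring
      _ < ε * (R ^ (p + 1) * R ^ (-(2:ℝ))) := by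
          apply mul_lt_mul_of_pos_left _ hε
          exact mul_lt_mul_of_pos_right hAμm (Real.rpow_pos_of_pos hR0 _)
      _ = ε * ‖a‖⁻¹ := by rw [hcomb]
  have hm1 : m - 1 < m := by omega
  have hgDfin : ‖a‖ * rr (m-1) ^ (p - 1) * max (rr (m-1)) ‖((p:ℕ) : K)‖ * DD (m-1) <
      ε * ‖a‖⁻¹ := by
    have hg0 : (0:ℝ) ≤ ‖a‖ * rr (m-1) ^ (p - 1) * max (rr (m-1)) ‖((p:ℕ) : K)‖ := by
      have := hr_pos (m-1)
      positivity
    have hmaxlt1 : max (rr (m-1)) ‖((p:ℕ) : K)‖ < 1 := max_lt (hr_lt1 _ hm1) hpK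
    have hrm1 : rr ((m-1) + 1) = 1 := by
      rw [show m - 1 + 1 = m by omega]
      simp only [hrrdef]
      exact pvs_r_m hp2 hα1 hR
    have hcomp : ‖a‖ * rr (m-1) ^ (p - 1) * max (rr (m-1)) ‖((p:ℕ) : K)‖ * rr (m-1) =
        max (rr (m-1)) ‖((p:ℕ) : K)‖ := by
      calc ‖a‖ * rr (m-1) ^ (p - 1) * max (rr (m-1)) ‖((p:ℕ) : K)‖ * rr (m-1)
          = (‖a‖ * rr (m-1) ^ p) * max (rr (m-1)) ‖((p:ℕ) : K)‖ := by
            rw [show rr (m-1) ^ p = rr (m-1) ^ (p - 1) * rr (m-1) from by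
              rw [← pow_succ]; congr 1; omega]
            ring
        _ = rr ((m-1) + 1) * max (rr (m-1)) ‖((p:ℕ) : K)‖ := by rw [hrec]
        _ = max (rr (m-1)) ‖((p:ℕ) : K)‖ := by rw [hrm1, one_mul]
    simp only [hDDdef]
    rw [mul_max_of_nonneg _ _ hg0]
    apply max_lt
    · calc ‖a‖ * rr (m-1) ^ (p - 1) * max (rr (m-1)) ‖((p:ℕ) : K)‖ * (A * ε * WW (m-1))
          = (A * ε) * ((‖a‖ * rr (m-1) ^ (p - 1) * max (rr (m-1)) ‖((p:ℕ) : K)‖) * WW (m-1)) := by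
            ring
        _ ≤ (A * ε) * WW ((m-1) + 1) := by
            apply mul_le_mul_of_nonneg_left (hgW (m-1)) (by positivity)
        _ = A * ε * WW m := by rw [show m - 1 + 1 = m by omega]
        _ < ε * ‖a‖⁻¹ := hWm
    · calc ‖a‖ * rr (m-1) ^ (p - 1) * max (rr (m-1)) ‖((p:ℕ) : K)‖ * (ε * (rr (m-1) * ‖a‖⁻¹))
          = (‖a‖ * rr (m-1) ^ (p - 1) * max (rr (m-1)) ‖((p:ℕ) : K)‖ * rr (m-1)) *
            (ε * ‖a‖⁻¹) := by ring
        _ = max (rr (m-1)) ‖((p:ℕ) : K)‖ * (ε * ‖a‖⁻¹) := by rw [hcomp]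
        _ < 1 * (ε * ‖a‖⁻¹) := by
            apply mul_lt_mul_of_pos_right hmaxlt1 (by positivity)
        _ = ε * ‖a‖⁻¹ := one_mul _
  -- extract coefficient bounds at level n from `him`
  have hv : ∀ z : K, ‖z‖ ≤ ε →
      ‖(pvsTheta p a x n).eval z - (pvsTheta p a x n).coeff 0‖ ≤ A * ε := by
    intro z hz
    have hmem : a + z ∈ Metric.closedBall a ε := by
      rw [Metric.mem_closedBall, dist_eq_norm]
      simpa using hz
    have h2 := him (Set.mem_image_of_mem _ hmem)
    rw [Metric.mem_closedBall, dist_eq_norm] at h2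
    rw [pvsTheta_eval, coeff_zero_eq_eval_zero, pvsTheta_eval, add_zero]
    exact h2
  have hbase : ∀ j, 1 ≤ j → ‖(pvsTheta p a x n).coeff j‖ * ε ^ j ≤ A * ε := by
    have hco := pvs_coeff_le_of_forall_eval_le
      (pvsTheta p a x n - Polynomial.C ((pvsTheta p a x n).coeff 0)) hε
      (by intro z hz; rw [eval_sub, eval_C]; exact hv z hz)
    intro j hj
    have h3 := hco j
    rwa [coeff_sub, coeff_C, if_neg (by omega), sub_zero] at h3
  have hbase0 : ‖(pvsTheta p a x n).coeff 0‖ = rr 0 := by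
    rw [coeff_zero_eq_eval_zero, pvsTheta_eval, add_zero, hx]
    simp only [hrrdef]
    unfold pvs_r pvs_t
    norm_num
  -- the main induction
  have main : ∀ k, k < m → ‖(pvsTheta p a x (n + k)).coeff 0‖ = rr k ∧
      (∀ j, 1 ≤ j → ‖(pvsTheta p a x (n + k)).coeff j‖ * ε ^ j ≤ DD k) := by
    intro k
    induction k with
    | zero =>
      intro _
      constructor
      · simpa using hbase0
      · intro j hj
        have h4 : A * ε ≤ DD 0 := by
          simp only [hDDdef]
          refine le_trans ?_ (le_max_left _ _)
          calc A * ε = A * ε * 1 := by ring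
            _ ≤ A * ε * WW 0 := mul_le_mul_of_nonneg_left hW0 (by positivity)
        calc ‖(pvsTheta p a x (n + 0)).coeff j‖ * ε ^ j ≤ A * ε := by
              simpa using hbase j hj
          _ ≤ DD 0 := h4
    | succ k ih =>
      intro hk1
      have hk : k < m := by omega
      obtain ⟨ih0, ihj⟩ := ih hk
      have hstep := pvs_step p hp2 a hε hα1 h1a (hr_pos k) (hr_lt1 k hk) hple1 hεα.le
        (hεmax k) (hD_pos k) (hDr k hk) (pvsTheta p a x (n + k)) ih0 ihj
      constructor
      · rw [show n + (k + 1) = (n + k) + 1 by ring, pvsTheta_succ]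
        exact hstep.1.trans (hrec k)
      · intro j hj
        rw [show n + (k + 1) = (n + k) + 1 by ring, pvsTheta_succ]
        exact le_trans (hstep.2.1 j hj) (max_le (hgD k hk) (hεrp k))
  -- the final step
  obtain ⟨f0, fj⟩ := main (m - 1) hm1
  have hfin := pvs_step p hp2 a hε hα1 h1a (hr_pos (m-1)) (hr_lt1 _ hm1) hple1 hεα.le
    (hεmax (m-1)) (hD_pos (m-1)) (hDr (m-1) hm1) (pvsTheta p a x (n + (m-1))) f0 fj
  set FF := pvsTheta p a x (n + m) with hFFdef
  have hFFeq : (Polynomial.C (1 - a) - Polynomial.X) * (pvsTheta p a x (n + (m-1))) ^ (p + 1) +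
      (Polynomial.C a + Polynomial.X) * (pvsTheta p a x (n + (m-1))) ^ p = FF := by
    rw [hFFdef, show n + m = (n + (m - 1)) + 1 by omega, pvsTheta_succ]
  rw [hFFeq] at hfin
  have hMMf0 : (0:ℝ) ≤ ‖a‖ * rr (m-1) ^ (p - 1) * max (rr (m-1)) ‖((p:ℕ) : K)‖ * DD (m-1) := by
    have h5 := hr_pos (m-1)
    have h6 := hD_pos (m-1)
    positivity
  have hd2 : ∀ j, 2 ≤ j → ‖FF.coeff j‖ * ε ^ j ≤
      ‖a‖ * rr (m-1) ^ (p - 1) * max (rr (m-1)) ‖((p:ℕ) : K)‖ * DD (m-1) := hfin.2.2.1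
  have hd1 : ‖FF.coeff 1‖ = ‖a‖⁻¹ := by
    have hsp : ‖(pvsTheta p a x (n + (m-1))).coeff 0 ^ p *
        (1 - (pvsTheta p a x (n + (m-1))).coeff 0)‖ = ‖a‖⁻¹ := by
      rw [norm_mul, norm_pow, f0]
      have h1s : ‖(1:K) - (pvsTheta p a x (n + (m-1))).coeff 0‖ = 1 := by
        rw [sub_eq_add_neg,
          pvs_add_eq_left (by rw [norm_neg, f0, norm_one]; exact hr_lt1 _ hm1), norm_one]
      rw [h1s, mul_one]
      simp only [hrrdef]
      exact pvs_rmB hp2 hα1 hR hm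
    have hpert : ‖FF.coeff 1 - (pvsTheta p a x (n + (m-1))).coeff 0 ^ p *
        (1 - (pvsTheta p a x (n + (m-1))).coeff 0)‖ < ‖a‖⁻¹ := by
      have h2 := hfin.2.2.2
      have h3 := lt_of_le_of_lt h2 hgDfin
      rw [mul_comm ε ‖a‖⁻¹] at h3
      exact lt_of_mul_lt_mul_right h3 hε.le
    rw [show FF.coeff 1 = (pvsTheta p a x (n + (m-1))).coeff 0 ^ p *
        (1 - (pvsTheta p a x (n + (m-1))).coeff 0) +
        (FF.coeff 1 - (pvsTheta p a x (n + (m-1))).coeff 0 ^ p *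
        (1 - (pvsTheta p a x (n + (m-1))).coeff 0)) by ring]
    rw [pvs_add_eq_left (by rw [hsp]; exact hpert), hsp]
  have hMMflt : ‖a‖ * rr (m-1) ^ (p - 1) * max (rr (m-1)) ‖((p:ℕ) : K)‖ * DD (m-1) <
      ε * ‖a‖⁻¹ := hgDfin
  -- assembly
  have hfb : ∀ b : K, (phi p b)^[n + m] x = FF.eval (b - a) := by
    intro b
    rw [hFFdef, pvsTheta_eval, add_sub_cancel]
  have hc2 : (phi p a)^[n + m] x = FF.coeff 0 := by
    rw [coeff_zero_eq_eval_zero, hFFdef, pvsTheta_eval, add_zero]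
  have hrad : ε / ‖a‖ = ε * ‖a‖⁻¹ := div_eq_mul_inv _ _
  have hcoefbd : ∀ j, 1 ≤ j → ‖FF.coeff j‖ * ε ^ j ≤ ε * ‖a‖⁻¹ := by
    intro j hj
    rcases Nat.lt_or_ge j 2 with h2 | h2
    · have hj1 : j = 1 := by omega
      subst hj1
      rw [hd1, pow_one]
      exact le_of_eq (mul_comm _ _)
    · exact le_trans (hd2 j h2) hMMflt.le
  have hmapsb : ∀ b ∈ Metric.closedBall a ε, ‖FF.eval (b - a) - FF.coeff 0‖ ≤ ε * ‖a‖⁻¹ := by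
    intro b hb
    apply pvs_eval_sub_coeff_zero FF hε.le (by positivity) hcoefbd
    rw [Metric.mem_closedBall, dist_eq_norm] at hb
    exact hb
  refine ⟨?_, ?_, ?_⟩
  · intro b hb
    simp only [Metric.mem_closedBall]
    rw [dist_eq_norm, hfb b, hc2, hrad]
    exact hmapsb b hb
  · intro b hb b' hb' heq
    simp only at heq
    rw [hfb b, hfb b'] at heq
    have hzb : ‖b - a‖ ≤ ε := by rw [Metric.mem_closedBall, dist_eq_norm] at hb; exact hb
    have hzb' : ‖b' - a‖ ≤ ε := by rw [Metric.mem_closedBall, dist_eq_norm] at hb'; exact hb'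
    obtain ⟨E, hE1, hE2⟩ := pvs_diff_factor FF hε hMMf0 hd2 hzb hzb'
    have hEn : ‖E‖ < ‖a‖⁻¹ := by
      have h3 := lt_of_le_of_lt hE2 hMMflt
      rw [mul_comm ε ‖a‖⁻¹] at h3
      exact lt_of_mul_lt_mul_right h3 hε.le
    have hne : FF.coeff 1 + E ≠ 0 := by
      intro h0
      have h4 : E = -FF.coeff 1 := by
        have := eq_neg_of_add_eq_zero_right h0
        rw [this]
      rw [h4, norm_neg, hd1] at hEn
      exact lt_irrefl _ hEn
    have h4 : ((b - a) - (b' - a)) * (FF.coeff 1 + E) = 0 := by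
      rw [← hE1, heq, sub_self]
    have h5 : (b - a) - (b' - a) = 0 := by
      rcases mul_eq_zero.mp h4 with h | h
      · exact h
      · exact absurd h hne
    have h6 : b - b' = 0 := by
      rw [show b - b' = (b - a) - (b' - a) by ring]
      exact h5
    exact sub_eq_zero.mp h6
  · intro cc hcc
    rw [Metric.mem_closedBall, dist_eq_norm, hc2, hrad] at hcc
    have hd1ne : FF.coeff 1 ≠ 0 := by
      intro h0
      rw [h0, norm_zero] at hd1
      exact (ne_of_gt hB0) hd1.symm
    set U : K → K := fun b => b + (FF.coeff 1)⁻¹ * (cc - FF.eval (b - a)) with hUdef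
    have hUmaps : ∀ b ∈ Metric.closedBall a ε, U b ∈ Metric.closedBall a ε := by
      intro b hb
      rw [Metric.mem_closedBall, dist_eq_norm]
      have h6 : U b - a = (b - a) + (FF.coeff 1)⁻¹ * (cc - FF.eval (b - a)) := by
        simp only [hUdef]
        ring
      rw [h6]
      apply le_trans (pvs_add_le _ _)
      apply max_le
      · rw [Metric.mem_closedBall, dist_eq_norm] at hb
        exact hb
      · rw [norm_mul, norm_inv, hd1, inv_inv]
        have h7 : ‖cc - FF.eval (b - a)‖ ≤ ε * ‖a‖⁻¹ := by
          rw [show cc - FF.eval (b - a) =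
            (cc - FF.coeff 0) + (FF.coeff 0 - FF.eval (b - a)) by ring]
          apply le_trans (pvs_add_le _ _)
          apply max_le hcc
          rw [norm_sub_rev]
          exact hmapsb b hb
        calc ‖a‖ * ‖cc - FF.eval (b - a)‖ ≤ ‖a‖ * (ε * ‖a‖⁻¹) :=
              mul_le_mul_of_nonneg_left h7 hα0.le
          _ = ε := by field_simp
    set θ : ℝ := ‖a‖ * (‖a‖ * rr (m-1) ^ (p - 1) * max (rr (m-1)) ‖((p:ℕ) : K)‖ * DD (m-1)) / ε
      with hθdef
    have hθ0 : 0 ≤ θ := by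
      rw [hθdef]
      have h5 := hr_pos (m-1)
      have h6 := hD_pos (m-1)
      positivity
    have hθ1 : θ < 1 := by
      rw [hθdef, div_lt_one hε]
      calc ‖a‖ * (‖a‖ * rr (m-1) ^ (p - 1) * max (rr (m-1)) ‖((p:ℕ) : K)‖ * DD (m-1))
          < ‖a‖ * (ε * ‖a‖⁻¹) := mul_lt_mul_of_pos_left hMMflt hα0
        _ = ε := by field_simp
    have hlip : ∀ b b', b ∈ Metric.closedBall a ε → b' ∈ Metric.closedBall a ε →
        ‖U b - U b'‖ ≤ θ * ‖b - b'‖ := by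
      intro b b' hb hb'
      have hzb : ‖b - a‖ ≤ ε := by rw [Metric.mem_closedBall, dist_eq_norm] at hb; exact hb
      have hzb' : ‖b' - a‖ ≤ ε := by rw [Metric.mem_closedBall, dist_eq_norm] at hb'; exact hb'
      obtain ⟨E, hE1, hE2⟩ := pvs_diff_factor FF hε hMMf0 hd2 hzb hzb'
      have h8 : FF.eval (b - a) - FF.eval (b' - a) = (b - b') * (FF.coeff 1 + E) := by
        rw [hE1]
        ring
      have hU : U b - U b' = -((b - b') * ((FF.coeff 1)⁻¹ * E)) := by
        simp only [hUdef]
        have h9 : b + (FF.coeff 1)⁻¹ * (cc - FF.eval (b - a)) -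
            (b' + (FF.coeff 1)⁻¹ * (cc - FF.eval (b' - a))) =
            (b - b') - (FF.coeff 1)⁻¹ * (FF.eval (b - a) - FF.eval (b' - a)) := by ring
        rw [h9, h8]
        field_simp
        ring
      rw [hU, norm_neg, norm_mul, norm_mul, norm_inv, hd1, inv_inv]
      have hEb : ‖E‖ ≤ (‖a‖ * rr (m-1) ^ (p - 1) * max (rr (m-1)) ‖((p:ℕ) : K)‖ * DD (m-1)) / ε := by
        rw [le_div_iff₀ hε]
        exact hE2
      calc ‖b - b'‖ * (‖a‖ * ‖E‖)
          ≤ ‖b - b'‖ * (‖a‖ *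
            ((‖a‖ * rr (m-1) ^ (p - 1) * max (rr (m-1)) ‖((p:ℕ) : K)‖ * DD (m-1)) / ε)) := by
            apply mul_le_mul_of_nonneg_left
              (mul_le_mul_of_nonneg_left hEb hα0.le) (norm_nonneg _)
        _ = θ * ‖b - b'‖ := by rw [hθdef]; ring
    have hclosed : IsClosed (Metric.closedBall a ε) := Metric.isClosed_closedBall
    haveI : CompleteSpace (Metric.closedBall a ε) := hclosed.completeSpace_coe
    haveI : Nonempty (Metric.closedBall a ε) := ⟨⟨a, Metric.mem_closedBall_self hε.le⟩⟩
    set Umap : Metric.closedBall a ε → Metric.closedBall a ε :=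
      fun y => ⟨U y.1, hUmaps y.1 y.2⟩ with hUmapdef
    have hcontr : ContractingWith θ.toNNReal Umap := by
      constructor
      · exact_mod_cast Real.toNNReal_lt_one.mpr hθ1
      · apply LipschitzWith.of_dist_le_mul
        intro y y'
        rw [Subtype.dist_eq, dist_eq_norm, Subtype.dist_eq, dist_eq_norm,
          Real.coe_toNNReal θ hθ0]
        exact hlip y.1 y'.1 y.2 y'.2
    set bf := ContractingWith.fixedPoint Umap hcontr with hbfdef
    have hfix : Umap bf = bf := ContractingWith.fixedPoint_isFixedPt hcontr
    have h9 : U bf.1 = bf.1 := congrArg Subtype.val hfix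
    have h10 : (FF.coeff 1)⁻¹ * (cc - FF.eval (bf.1 - a)) = 0 := by
      have h11 : bf.1 + (FF.coeff 1)⁻¹ * (cc - FF.eval (bf.1 - a)) = bf.1 := by
        simpa only [hUdef] using h9
      exact add_eq_left.mp h11
    have h12 : cc - FF.eval (bf.1 - a) = 0 := by
      rcases mul_eq_zero.mp h10 with h | h
      · exact absurd h (inv_ne_zero hd1ne)
      · exact h
    refine ⟨bf.1, bf.2, ?_⟩
    simp only
    rw [hfb bf.1]
    exact (sub_eq_zero.mp h12).symm
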